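/- Suppose f ∈ C²(ℝ^d) with ‖∇²f(x)‖ ≤ M for all x, and 0 < α < 1/M. Then for every coordinate index i ∈ {1,…,d}, the one-step map φ_i : ℝ^d → ℝ^d defined by φ_i(x) := x − α e_i e_iᵀ ∇f(x) is a bijection of ℝ^d whose inverse is continuously differentiable (a C¹ diffeomorphism of ℝ^d). -/

import Mathlib

open Filter Topology

noncomputable section

/-- The Hessian `∇²f(x)` of `f` at `x`, as a continuous linear map. -/
def hess (d : ℕ) (f : EuclideanSpace ℝ (Fin d) → ℝ) (x : EuclideanSpace ℝ (Fin d)) :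
    EuclideanSpace ℝ (Fin d) →L[ℝ] EuclideanSpace ℝ (Fin d) :=
  fderiv ℝ (gradient f) x

/-- For `0 < α < 1/M`, the one-step coordinate gradient descent map
`φ_i(x) = x − α e_i e_iᵀ ∇f(x)` is a bijection of `ℝ^d` with `C¹` inverse. -/
theorem rcgd_step_is_diffeomorphism
    {d : ℕ} (hd : 1 ≤ d) (f : EuclideanSpace ℝ (Fin d) → ℝ) (M α : ℝ)
    (hf : ContDiff ℝ 2 f)
    (hM : ∀ x, ‖hess d f x‖ ≤ M)
    (hα : 0 < α) (hα' : α < 1 / M) (i : Fin d) :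
    ∃ g : EuclideanSpace ℝ (Fin d) → EuclideanSpace ℝ (Fin d),
      ContDiff ℝ 1 g ∧
      Function.LeftInverse g
        (fun x => x - (α * gradient f x i) • EuclideanSpace.single i (1 : ℝ)) ∧
      Function.RightInverse g
        (fun x => x - (α * gradient f x i) • EuclideanSpace.single i (1 : ℝ)) := by
  classical
  have hM0 : 0 < M := by
    rcases lt_or_ge 0 M with h | h
    · exact h
    · exfalso
      have : 1 / M ≤ 0 := one_div_nonpos.mpr h
      linarith
  have hαM : α * M < 1 := (lt_div_iff₀ hM0).mp hα'
  have hαM0 : 0 ≤ α * M := le_of_lt (mul_pos hα hM0)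
  -- the gradient is C¹
  have hfd : ContDiff ℝ 1 (fderiv ℝ f) := hf.fderiv_right (by norm_num)
  have hgrad : ContDiff ℝ 1 (gradient f) :=
    ((InnerProductSpace.toDual ℝ (EuclideanSpace ℝ (Fin d))).symm.contDiff.of_le
      le_top).comp hfd
  have hgx : ∀ x, HasFDerivAt (gradient f) (hess d f x) x := fun x =>
    (hgrad.differentiable one_ne_zero x).hasFDerivAt
  -- the map and its derivative
  set φ : EuclideanSpace ℝ (Fin d) → EuclideanSpace ℝ (Fin d) :=
    fun x => x - (α * gradient f x i) • EuclideanSpace.single i (1 : ℝ) with hφdef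
  set D : EuclideanSpace ℝ (Fin d) →
      (EuclideanSpace ℝ (Fin d) →L[ℝ] EuclideanSpace ℝ (Fin d)) :=
    fun x => (α • ((EuclideanSpace.proj i).comp (hess d f x))).smulRight
      (EuclideanSpace.single i (1 : ℝ)) with hDdef
  have hDx : ∀ x, HasFDerivAt
      (fun x => (α * gradient f x i) • EuclideanSpace.single i (1 : ℝ)) (D x) x := by
    intro x
    have h1 : HasFDerivAt (fun x => gradient f x i)
        ((EuclideanSpace.proj i).comp (hess d f x)) x :=
      (EuclideanSpace.proj (𝕜 := ℝ) i).hasFDerivAt.comp x (hgx x)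
    exact (h1.const_mul α).smul_const _
  have hproj : ‖(EuclideanSpace.proj (𝕜 := ℝ) i :
      EuclideanSpace ℝ (Fin d) →L[ℝ] ℝ)‖ ≤ 1 := by
    refine ContinuousLinearMap.opNorm_le_bound _ zero_le_one fun y => ?_
    have hy : y i = inner ℝ (EuclideanSpace.single i (1 : ℝ)) y := by
      rw [EuclideanSpace.inner_single_left]; simp
    have := abs_real_inner_le_norm (EuclideanSpace.single i (1 : ℝ)) y
    rw [EuclideanSpace.norm_single, norm_one, one_mul] at this
    calc ‖(EuclideanSpace.proj (𝕜 := ℝ) i) y‖ = |y i| := rfl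
      _ ≤ ‖y‖ := by rw [hy]; exact this
      _ = 1 * ‖y‖ := (one_mul _).symm
  have hDnorm : ∀ x, ‖D x‖ ≤ α * M := by
    intro x
    rw [hDdef]
    simp only
    rw [ContinuousLinearMap.norm_smulRight_apply, EuclideanSpace.norm_single, norm_one,
      mul_one, norm_smul, Real.norm_eq_abs, abs_of_pos hα]
    have h2 : ‖(EuclideanSpace.proj (𝕜 := ℝ) i).comp (hess d f x)‖ ≤ M := by
      calc ‖(EuclideanSpace.proj (𝕜 := ℝ) i).comp (hess d f x)‖
          ≤ ‖(EuclideanSpace.proj (𝕜 := ℝ) i :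
              EuclideanSpace ℝ (Fin d) →L[ℝ] ℝ)‖ * ‖hess d f x‖ :=
            ContinuousLinearMap.opNorm_comp_le _ _
        _ ≤ 1 * M := by
            exact mul_le_mul hproj (hM x) (norm_nonneg _) zero_le_one
        _ = M := one_mul M
    exact mul_le_mul_of_nonneg_left h2 hα.le
  have hDlt : ∀ x, ‖D x‖ < 1 := fun x => lt_of_le_of_lt (hDnorm x) hαM
  -- the derivative of φ as a continuous linear equivalence
  let T : ∀ _ : EuclideanSpace ℝ (Fin d),
      EuclideanSpace ℝ (Fin d) ≃L[ℝ] EuclideanSpace ℝ (Fin d) := fun x =>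
    ContinuousLinearEquiv.ofUnit (Units.oneSub (D x) (hDlt x))
  have hT : ∀ x, (T x : EuclideanSpace ℝ (Fin d) →L[ℝ] EuclideanSpace ℝ (Fin d))
      = ContinuousLinearMap.id ℝ _ - D x := fun x => by
    ext v; rfl
  have hφ' : ∀ x, HasFDerivAt φ
      (T x : EuclideanSpace ℝ (Fin d) →L[ℝ] EuclideanSpace ℝ (Fin d)) x := by
    intro x
    rw [hT]
    exact (hasFDerivAt_id x).sub (hDx x)
  -- Lipschitz estimate for the nonlinear part
  have hlip : ∀ x y : EuclideanSpace ℝ (Fin d),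
      ‖((α * gradient f x i) • EuclideanSpace.single i (1 : ℝ) :
          EuclideanSpace ℝ (Fin d))
        - (α * gradient f y i) • EuclideanSpace.single i (1 : ℝ)‖ ≤ α * M * ‖x - y‖ := by
    intro x y
    have := Convex.norm_image_sub_le_of_norm_hasFDerivWithin_le
      (f := fun x => (α * gradient f x i) • EuclideanSpace.single i (1 : ℝ))
      (f' := D) (C := α * M) (fun z _ => (hDx z).hasFDerivWithinAt)
      (fun z _ => hDnorm z) convex_univ (Set.mem_univ y) (Set.mem_univ x)
    simpa using this
  haveI : Nontrivial (EuclideanSpace ℝ (Fin d)) := by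
    refine nontrivial_of_ne (EuclideanSpace.single i (1 : ℝ)) 0 fun h => ?_
    have := congrArg (fun v : EuclideanSpace ℝ (Fin d) => v i) h
    simp [EuclideanSpace.single_apply] at this
  -- φ approximates the identity
  have happrox : ApproximatesLinearOn φ
      ((ContinuousLinearEquiv.refl ℝ (EuclideanSpace ℝ (Fin d))) :
        EuclideanSpace ℝ (Fin d) →L[ℝ] EuclideanSpace ℝ (Fin d))
      Set.univ ⟨α * M, hαM0⟩ := by
    intro x _ y _
    have : φ x - φ y - (x - y)
        = -(((α * gradient f x i) • EuclideanSpace.single i (1 : ℝ) :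
              EuclideanSpace ℝ (Fin d))
            - (α * gradient f y i) • EuclideanSpace.single i (1 : ℝ)) := by
      simp only [hφdef]
      abel
    have h2 := hlip y x
    rw [norm_sub_rev y x] at h2
    change _ ≤ α * M * ‖x - y‖
    simpa [this] using h2
  have hc : Subsingleton (EuclideanSpace ℝ (Fin d)) ∨
      (⟨α * M, hαM0⟩ : NNReal) <
      ‖((((ContinuousLinearEquiv.refl ℝ (EuclideanSpace ℝ (Fin d))).symm :
          EuclideanSpace ℝ (Fin d) ≃L[ℝ] EuclideanSpace ℝ (Fin d))) :
          EuclideanSpace ℝ (Fin d) →L[ℝ] EuclideanSpace ℝ (Fin d))‖₊⁻¹ := by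
    right
    have : ‖((((ContinuousLinearEquiv.refl ℝ (EuclideanSpace ℝ (Fin d))).symm :
        EuclideanSpace ℝ (Fin d) ≃L[ℝ] EuclideanSpace ℝ (Fin d))) :
        EuclideanSpace ℝ (Fin d) →L[ℝ] EuclideanSpace ℝ (Fin d))‖₊ = 1 := by
      simp [ContinuousLinearEquiv.refl_symm, ContinuousLinearEquiv.coe_refl]
    rw [this, inv_one]
    exact_mod_cast hαM
  let Φ := happrox.toHomeomorph φ hc
  have hΦ : ∀ x, Φ x = φ x := fun x => rfl
  have hΦsymm_left : ∀ x, Φ.symm (φ x) = x := fun x => Φ.symm_apply_apply x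
  have hΦsymm_right : ∀ y, φ (Φ.symm y) = y := fun y => Φ.apply_symm_apply y
  -- the inverse is C¹
  have hφC1 : ContDiff ℝ 1 φ :=
    contDiff_id.sub ((contDiff_const.mul
      ((EuclideanSpace.proj (𝕜 := ℝ) i).contDiff.comp hgrad)).smul contDiff_const)
  have hg : ∀ y, ContDiffAt ℝ 1 (⇑Φ.symm) y := by
    intro y
    have hCA : ContDiffAt ℝ 1 φ (Φ.symm y) := hφC1.contDiffAt
    have hloc := hCA.to_localInverse (f' := T (Φ.symm y)) (hφ' _) one_ne_zero
    rw [hΦsymm_right y] at hloc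
    refine hloc.congr_of_eventuallyEq ?_
    have huniq := (hCA.hasStrictFDerivAt' (hφ' _) one_ne_zero).localInverse_unique
      (g := ⇑Φ.symm) (Eventually.of_forall fun z => hΦsymm_left z)
    rw [hΦsymm_right y] at huniq
    exact huniq
  exact ⟨⇑Φ.symm, contDiff_iff_contDiffAt.mpr hg, hΦsymm_left, hΦsymm_right⟩
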